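/- arXiv:1210.0007 — 2 statements merged into one kernel-verified Lean document; each statement's English description precedes it below -/
import Mathlib

section
/- Let Ω := { ω ∈ C([0,T], ℝ^d) : ω_0 = 0 } with the sup norm ‖ω‖_T := sup_{0≤s≤T} |ω_s|, let B be the canonical process B_t(ω) = ω_t, and let 𝔽 = (F_t)_{0≤t≤T} be its raw natural filtration, F_t := σ(B_s : s ≤ t). Let H : Ω → [0,T] be an 𝔽-stopping time, let F_H := { A ⊆ Ω : A ∩ {H ≤ t} ∈ F_t for all t ∈ [0,T] }, let δ > 0, let 0 = t_0 < t_1 < ⋯ < t_N = T be a grid with t_{k+1} − t_k ≤ δ for all k, and set t_{N+1} := T + δ. Then for every E ∈ F_H there exist a countable partition (Ẽ_k)_{k≥1} ⊆ F_H of E, indices p_k ∈ {0,…,N}, and paths ω^k ∈ Ẽ_k (for each k with Ẽ_k nonempty) such that for every k: (i) H(ω) ∈ [t_{p_k}, t_{p_k+1}) for all ω ∈ Ẽ_k; (ii) sup_{ω,ω' ∈ Ẽ_k} ‖ω_{·∧H(ω)} − ω'_{·∧H(ω')}‖_T ≤ δ; (iii) H(ω^k) = min_{ω ∈ Ẽ_k}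 H(ω), i.e. the minimum of H over Ẽ_k is attained at ω^k. -/
open MeasureTheory

/-- The canonical path space: continuous paths `[0,T] → ℝ^d` starting at the origin. -/
def PathSpace (d : ℕ) (T : ℝ) (hT : 0 ≤ T) :=
  {ω : C(Set.Icc (0 : ℝ) T, EuclideanSpace ℝ (Fin d)) // ω ⟨0, le_refl 0, hT⟩ = 0}

/-- The path `ω` stopped at time `r`, i.e. `s ↦ ω_{s ∧ r}`. -/
noncomputable def stoppedPath (d : ℕ) (T : ℝ) (hT : 0 ≤ T)
    (ω : C(Set.Icc (0 : ℝ) T, EuclideanSpace ℝ (Fin d))) (r : ℝ) :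
    Set.Icc (0 : ℝ) T → EuclideanSpace ℝ (Fin d) :=
  fun s => ω (Set.projIcc 0 T hT (min s.1 r))

/-- The raw natural filtration of the canonical process: `F_t := σ(B_s : s ≤ t)`. -/
noncomputable def pathSigma (d : ℕ) (T : ℝ) (hT : 0 ≤ T) (t : ℝ) :
    MeasurableSpace (PathSpace d T hT) :=
  ⨆ (s : Set.Icc (0 : ℝ) T) (_ : (s : ℝ) ≤ t),
    MeasurableSpace.comap (fun ω : PathSpace d T hT => ω.1 s) inferInstance

lemma pathSigma_mono (d : ℕ) (T : ℝ) (hT : 0 ≤ T) {s t : ℝ} (hst : s ≤ t) :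
    pathSigma d T hT s ≤ pathSigma d T hT t := by
  refine iSup₂_le fun u hu => le_iSup₂ (f := fun (u : Set.Icc (0:ℝ) T) (_ : (u:ℝ) ≤ t) =>
    MeasurableSpace.comap (fun ω : PathSpace d T hT => ω.1 u) inferInstance) u (hu.trans hst)

lemma measurable_eval_pathSigma (d : ℕ) (T : ℝ) (hT : 0 ≤ T) {t : ℝ} {s : Set.Icc (0:ℝ) T}
    (hs : (s : ℝ) ≤ t) :
    Measurable[pathSigma d T hT t] fun ω : PathSpace d T hT => ω.1 s := by
  rw [measurable_iff_comap_le]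
  exact le_iSup₂ (f := fun (u : Set.Icc (0:ℝ) T) (_ : (u:ℝ) ≤ t) =>
    MeasurableSpace.comap (fun ω : PathSpace d T hT => ω.1 u) inferInstance) s hs

section Stop
variable {d : ℕ} {T : ℝ} {hT : 0 ≤ T} {H : PathSpace d T hT → ℝ}

/-- `{H ≤ a}` is `F_t`-measurable for `a ≤ t`. -/
lemma measurableSet_H_le (hHrange : ∀ ω, H ω ∈ Set.Icc (0 : ℝ) T)
    (hHstop : ∀ t ∈ Set.Icc (0 : ℝ) T, MeasurableSet[pathSigma d T hT t] {ω | H ω ≤ t})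
    {t : ℝ} (ht : t ∈ Set.Icc (0 : ℝ) T) {a : ℝ} (ha : a ≤ t) :
    MeasurableSet[pathSigma d T hT t] {ω | H ω ≤ a} := by
  rcases lt_or_ge a 0 with h0 | h0
  · have : {ω : PathSpace d T hT | H ω ≤ a} = ∅ := by
      ext ω; simp only [Set.mem_setOf_eq, Set.mem_empty_iff_false, iff_false, not_le]
      exact lt_of_lt_of_le h0 (hHrange ω).1
    rw [this]; exact @MeasurableSet.empty _ (pathSigma d T hT t)
  · exact pathSigma_mono d T hT ha _ (hHstop a ⟨h0, ha.trans ht.2⟩)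

/-- `min (H ·) t` is `F_t`-measurable. -/
lemma measurable_minH (hHrange : ∀ ω, H ω ∈ Set.Icc (0 : ℝ) T)
    (hHstop : ∀ t ∈ Set.Icc (0 : ℝ) T, MeasurableSet[pathSigma d T hT t] {ω | H ω ≤ t})
    {t : ℝ} (ht : t ∈ Set.Icc (0 : ℝ) T) :
    Measurable[pathSigma d T hT t] fun ω => min (H ω) t := by
  apply measurable_of_Iic
  intro a
  rcases le_or_gt t a with h | h
  · have : (fun ω : PathSpace d T hT => min (H ω) t) ⁻¹' Set.Iic a = Set.univ := by
      ext ω; simp only [Set.mem_preimage, Set.mem_Iic, Set.mem_univ, iff_true]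
      exact le_trans (min_le_right _ _) h
    rw [this]; exact MeasurableSet.univ
  · have : (fun ω : PathSpace d T hT => min (H ω) t) ⁻¹' Set.Iic a = {ω | H ω ≤ a} := by
      ext ω; simp only [Set.mem_preimage, Set.mem_Iic, Set.mem_setOf_eq]
      constructor
      · intro hm
        rcases min_cases (H ω) t with ⟨he, _⟩ | ⟨he, hlt⟩
        · rwa [he] at hm
        · rw [he] at hm; exact absurd hm (not_le.2 h)
      · intro hh; exact le_trans (min_le_left _ _) hh
    rw [this]; exact measurableSet_H_le hHrange hHstop ht h.le

/-- Key lemma: evaluation of the path at the stopped (random) time is `F_t`-measurable. -/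
lemma measurable_stoppedEval (hHrange : ∀ ω, H ω ∈ Set.Icc (0 : ℝ) T)
    (hHstop : ∀ t ∈ Set.Icc (0 : ℝ) T, MeasurableSet[pathSigma d T hT t] {ω | H ω ≤ t})
    {t : ℝ} (ht : t ∈ Set.Icc (0 : ℝ) T) (s : Set.Icc (0:ℝ) T) :
    Measurable[pathSigma d T hT t]
      (fun ω : PathSpace d T hT =>
        ω.1 (Set.projIcc 0 T hT (min s.1 (min (H ω) t)))) := by
  letI F : MeasurableSpace (PathSpace d T hT) := pathSigma d T hT t
  have hmin : Measurable[F] fun ω => min (H ω) t := measurable_minH hHrange hHstop ht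
  -- approximations
  set f : ℕ → PathSpace d T hT → EuclideanSpace ℝ (Fin d) := fun n ω =>
    ω.1 (Set.projIcc 0 T hT (min s.1 (min t ((⌈(min (H ω) t) * 2^n⌉₊ : ℝ) / 2^n))))
  have hk : ∀ n, Measurable[F] fun ω => (⌈(min (H ω) t) * 2^n⌉₊ : ℕ) := fun n =>
    (hmin.mul_const _).nat_ceil
  have hfmeas : ∀ n, Measurable[F] (f n) := by
    intro n
    have hg : Measurable
        (fun q : PathSpace d T hT × ℕ =>
          q.1.1 (Set.projIcc 0 T hT (min s.1 (min t ((q.2 : ℝ) / 2^n))))) := by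
      apply measurable_from_prod_countable_left
      intro k
      show Measurable[F] fun ω : PathSpace d T hT =>
        ω.1 (Set.projIcc 0 T hT (min s.1 (min t ((k : ℝ) / 2^n))))
      apply measurable_eval_pathSigma
      have hle : (min s.1 (min t ((k : ℝ) / 2^n))) ≤ t :=
        le_trans (min_le_right _ _) (min_le_left _ _)
      calc ((Set.projIcc 0 T hT (min s.1 (min t ((k:ℝ) / 2^n)))) : ℝ)
          = max 0 (min T (min s.1 (min t ((k:ℝ)/2^n)))) := rfl
        _ ≤ t := max_le ht.1 (le_trans (min_le_right _ _) hle)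
    exact hg.comp (measurable_id.prodMk (hk n))
  apply measurable_of_tendsto_metrizable hfmeas
  rw [tendsto_pi_nhds]
  intro ω
  have hcont : Continuous fun r : ℝ => ω.1 (Set.projIcc 0 T hT (min s.1 r)) :=
    ω.1.continuous.comp (continuous_projIcc.comp (continuous_const.min continuous_id))
  have h0 : 0 ≤ min (H ω) t := le_min (hHrange ω).1 ht.1
  have htend : Filter.Tendsto
      (fun n : ℕ => min t ((⌈(min (H ω) t) * 2^n⌉₊ : ℝ) / 2^n)) Filter.atTop
      (nhds (min (H ω) t)) := by
    set h := min (H ω) t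
    have h1 : Filter.Tendsto (fun n : ℕ => (⌈h * 2^n⌉₊ : ℝ) / 2^n) Filter.atTop (nhds h) := by
      have hle : ∀ n : ℕ, h ≤ (⌈h * 2^n⌉₊ : ℝ) / 2^n := by
        intro n
        rw [le_div_iff₀ (by positivity)]
        exact Nat.le_ceil _
      have hge : ∀ n : ℕ, (⌈h * 2^n⌉₊ : ℝ) / 2^n ≤ h + 1/2^n := by
        intro n
        rw [div_le_iff₀ (by positivity)]
        have := (Nat.ceil_lt_add_one (by positivity : (0:ℝ) ≤ h * 2^n)).le
        calc (⌈h * 2^n⌉₊ : ℝ) ≤ h * 2^n + 1 := this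
          _ = (h + 1/2^n) * 2^n := by field_simp
      have hlim : Filter.Tendsto (fun n : ℕ => h + 1/2^n) Filter.atTop (nhds h) := by
        have : Filter.Tendsto (fun n : ℕ => (1:ℝ)/2^n) Filter.atTop (nhds 0) := by
          simpa [one_div, Function.comp_def] using tendsto_inv_atTop_zero.comp
            (tendsto_pow_atTop_atTop_of_one_lt (by norm_num : (1:ℝ) < 2))
        simpa using Filter.Tendsto.const_add h this
      exact tendsto_of_tendsto_of_tendsto_of_le_of_le tendsto_const_nhds hlim hle hge
    have h2 := Filter.Tendsto.min (tendsto_const_nhds (x := t)) h1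
    simpa [min_eq_right (show h ≤ t from min_le_right (H ω) t)] using h2
  exact (hcont.tendsto _).comp htend

end Stop

/-- membership in the stopping-time σ-algebra `F_H`. -/
def memFH {d : ℕ} {T : ℝ} {hT : 0 ≤ T} (H : PathSpace d T hT → ℝ)
    (A : Set (PathSpace d T hT)) : Prop :=
  ∀ t ∈ Set.Icc (0:ℝ) T, MeasurableSet[pathSigma d T hT t] (A ∩ {ω | H ω ≤ t})

section FH
variable {d : ℕ} {T : ℝ} {hT : 0 ≤ T} {H : PathSpace d T hT → ℝ}
variable (hHrange : ∀ ω, H ω ∈ Set.Icc (0 : ℝ) T)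
variable (hHstop : ∀ t ∈ Set.Icc (0 : ℝ) T, MeasurableSet[pathSigma d T hT t] {ω | H ω ≤ t})

lemma memFH_empty : memFH H (∅ : Set (PathSpace d T hT)) := by
  intro t ht
  rw [Set.empty_inter]
  exact @MeasurableSet.empty _ (pathSigma d T hT t)

include hHstop in
lemma memFH_compl {A : Set (PathSpace d T hT)} (hA : memFH H A) : memFH H Aᶜ := by
  intro t ht
  have : Aᶜ ∩ {ω | H ω ≤ t} = {ω | H ω ≤ t} \ (A ∩ {ω | H ω ≤ t}) := by
    ext ω; simp only [Set.mem_inter_iff, Set.mem_compl_iff, Set.mem_diff, Set.mem_setOf_eq]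
    tauto
  rw [this]
  exact (hHstop t ht).diff (hA t ht)

lemma memFH_iUnion {A : ℕ → Set (PathSpace d T hT)} (hA : ∀ n, memFH H (A n)) :
    memFH H (⋃ n, A n) := by
  intro t ht
  rw [Set.iUnion_inter]
  exact MeasurableSet.iUnion fun n => hA n t ht

lemma memFH_inter {A B : Set (PathSpace d T hT)} (hA : memFH H A) (hB : memFH H B) :
    memFH H (A ∩ B) := by
  intro t ht
  have : (A ∩ B) ∩ {ω | H ω ≤ t} = (A ∩ {ω | H ω ≤ t}) ∩ (B ∩ {ω | H ω ≤ t}) := by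
    ext ω; simp only [Set.mem_inter_iff, Set.mem_setOf_eq]; tauto
  rw [this]
  exact (hA t ht).inter (hB t ht)

include hHstop in
lemma memFH_diff {A B : Set (PathSpace d T hT)} (hA : memFH H A) (hB : memFH H B) :
    memFH H (A \ B) :=
  memFH_inter hA (memFH_compl hHstop hB)

include hHrange hHstop in
lemma memFH_Hle (a : ℝ) : memFH H {ω | H ω ≤ a} := by
  intro t ht
  have : {ω : PathSpace d T hT | H ω ≤ a} ∩ {ω | H ω ≤ t} = {ω | H ω ≤ min a t} := by
    ext ω; simp only [Set.mem_inter_iff, Set.mem_setOf_eq, le_min_iff]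
  rw [this]
  exact measurableSet_H_le hHrange hHstop ht (min_le_right a t)

include hHrange hHstop in
lemma memFH_Hlt (a : ℝ) : memFH H {ω | H ω < a} := by
  have : {ω : PathSpace d T hT | H ω < a} = ⋃ n : ℕ, {ω | H ω ≤ a - 1/(n+1)} := by
    ext ω
    simp only [Set.mem_setOf_eq, Set.mem_iUnion]
    constructor
    · intro h
      obtain ⟨n, hn⟩ := exists_nat_one_div_lt (sub_pos.2 h)
      exact ⟨n, by linarith⟩
    · rintro ⟨n, hn⟩
      have : (0:ℝ) < 1/(n+1) := by positivity
      linarith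
  rw [this]
  exact memFH_iUnion fun n => memFH_Hle hHrange hHstop _

include hHrange hHstop in
lemma memFH_Hge (a : ℝ) : memFH H {ω | a ≤ H ω} := by
  have : {ω : PathSpace d T hT | a ≤ H ω} = {ω | H ω < a}ᶜ := by
    ext ω; simp [not_lt]
  rw [this]
  exact memFH_compl hHstop (memFH_Hlt hHrange hHstop a)

include hHrange hHstop in
lemma memFH_ball (x : C(Set.Icc (0:ℝ) T, EuclideanSpace ℝ (Fin d))) (r : ℝ) :
    memFH H {ω : PathSpace d T hT |
      ∀ s : Set.Icc (0:ℝ) T, ‖ω.1 (Set.projIcc 0 T hT (min s.1 (H ω))) - x s‖ ≤ r} := by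
  intro t ht
  obtain ⟨D, hDcount, hDdense⟩ := TopologicalSpace.exists_countable_dense (Set.Icc (0:ℝ) T)
  have hEq : {ω : PathSpace d T hT |
        ∀ s : Set.Icc (0:ℝ) T, ‖ω.1 (Set.projIcc 0 T hT (min s.1 (H ω))) - x s‖ ≤ r}
        ∩ {ω | H ω ≤ t} =
      {ω | H ω ≤ t} ∩ ⋂ s ∈ D,
        (fun ω : PathSpace d T hT => ω.1 (Set.projIcc 0 T hT (min s.1 (min (H ω) t))))
          ⁻¹' Metric.closedBall (x s) r := by
    ext ω
    simp only [Set.mem_inter_iff, Set.mem_setOf_eq, Set.mem_iInter, Set.mem_preimage,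
      Metric.mem_closedBall]
    constructor
    · rintro ⟨hall, hHt⟩
      refine ⟨hHt, fun s _ => ?_⟩
      rw [min_eq_left hHt, dist_eq_norm]
      exact hall s
    · rintro ⟨hHt, hD⟩
      refine ⟨fun s => ?_, hHt⟩
      have hcl : IsClosed {s : Set.Icc (0:ℝ) T |
          ‖ω.1 (Set.projIcc 0 T hT (min s.1 (H ω))) - x s‖ ≤ r} := by
        have hc : Continuous fun s : Set.Icc (0:ℝ) T =>
            ‖ω.1 (Set.projIcc 0 T hT (min s.1 (H ω))) - x s‖ :=
          ((ω.1.continuous.comp (continuous_projIcc.comp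
            (continuous_subtype_val.min continuous_const))).sub x.continuous).norm
        exact isClosed_le hc continuous_const
      have hsub : D ⊆ {s : Set.Icc (0:ℝ) T |
          ‖ω.1 (Set.projIcc 0 T hT (min s.1 (H ω))) - x s‖ ≤ r} := by
        intro s hs
        have := hD s hs
        rw [min_eq_left hHt, dist_eq_norm] at this
        exact this
      have huniv : (Set.univ : Set (Set.Icc (0:ℝ) T)) ⊆ {s : Set.Icc (0:ℝ) T |
          ‖ω.1 (Set.projIcc 0 T hT (min s.1 (H ω))) - x s‖ ≤ r} := by
        rw [← hDdense.closure_eq]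
        exact hcl.closure_subset_iff.mpr hsub
      exact huniv (Set.mem_univ s)
  rw [hEq]
  exact (hHstop t ht).inter (MeasurableSet.biInter hDcount fun s _ =>
    (measurable_stoppedEval hHrange hHstop ht s) measurableSet_closedBall)

end FH



/-- Refine a set into countably many H-interval slices, on each of which the min of H
is attained. -/
lemma refine_min {α : Type*} (H : α → ℝ) (T : ℝ) (hH0 : ∀ ω, 0 ≤ H ω) (hHT : ∀ ω, H ω ≤ T)
    (C : Set α) :
    ∃ (B : ℕ → Set α) (a b : ℕ → ℝ),
      (∀ n, B n = C ∩ {ω | a n ≤ H ω ∧ H ω < b n}) ∧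
      (⋃ n, B n) = C ∧
      Pairwise (Function.onFun Disjoint B) ∧
      (∀ n, (B n).Nonempty → ∃ ωk ∈ B n, ∀ ω ∈ B n, H ωk ≤ H ω) := by
  by_cases hmin : ∃ ω₀ ∈ C, ∀ ω ∈ C, H ω₀ ≤ H ω
  · -- minimum attained (or C empty handled separately below)
    obtain ⟨ω₀, hω₀C, hω₀min⟩ := hmin
    refine ⟨fun n => if n = 0 then C else ∅,
      fun n => if n = 0 then 0 else 1, fun n => if n = 0 then T + 1 else 0, ?_, ?_, ?_, ?_⟩
    · intro n
      by_cases hn : n = 0 <;> simp only [hn, if_true, if_false, reduceIte]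
      · ext ω
        simp only [Set.mem_inter_iff, Set.mem_setOf_eq]
        exact ⟨fun h => ⟨h, hH0 ω, by linarith [hHT ω]⟩, fun h => h.1⟩
      · ext ω
        simp only [Set.mem_empty_iff_false, Set.mem_inter_iff, Set.mem_setOf_eq, false_iff]
        rintro ⟨-, h1, h2⟩; linarith
    · apply Set.Subset.antisymm
      · exact Set.iUnion_subset fun n => by by_cases hn : n = 0 <;> simp [hn]
      · intro ω hω
        exact Set.mem_iUnion.2 ⟨0, by simpa using hω⟩
    · intro i j hij
      rcases Nat.eq_zero_or_pos i with hi | hi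
      · have hj : j ≠ 0 := by omega
        simp [Function.onFun, hj, Set.disjoint_empty]
      · have hi' : i ≠ 0 := by omega
        simp [Function.onFun, hi', Set.empty_disjoint]
    · intro n hn
      by_cases h0 : n = 0
      · subst h0; simp only [reduceIte]
        exact ⟨ω₀, hω₀C, hω₀min⟩
      · simp only [h0, reduceIte] at hn
        exact absurd hn (by simp)
  · by_cases hCne : C.Nonempty
    swap
    · -- C empty
      rw [Set.not_nonempty_iff_eq_empty] at hCne
      refine ⟨fun _ => ∅, fun _ => 1, fun _ => 0, ?_, ?_, ?_, ?_⟩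
      · intro n
        ext ω
        simp only [Set.mem_empty_iff_false, Set.mem_inter_iff, Set.mem_setOf_eq, false_iff]
        rintro ⟨-, h1, h2⟩; linarith
      · simp [hCne]
      · intro i j _; simp [Function.onFun, Set.empty_disjoint]
      · intro n hn; exact absurd hn (by simp)
    · -- inf not attained
      set m := sInf (H '' C) with hm
      have hne : (H '' C).Nonempty := hCne.image H
      have hbdd : BddBelow (H '' C) := ⟨0, by rintro y ⟨ω, -, rfl⟩; exact hH0 ω⟩
      have hgt : ∀ ω ∈ C, m < H ω := by
        intro ω hω
        rcases lt_or_eq_of_le (csInf_le hbdd ⟨ω, hω, rfl⟩) with h | h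
        · exact h
        · exfalso
          exact hmin ⟨ω, hω, fun ω' hω' => h ▸ csInf_le hbdd ⟨ω', hω', rfl⟩⟩
      -- construct strictly decreasing sequence of H-values tending to m
      have hstep : ∀ (n : ℕ) (x : ℝ), ∃ y : ℝ, m < x →
          (y ∈ H '' C ∧ y < x ∧ y < m + 1/(n+1+1)) := by
        intro n x
        by_cases hx : m < x
        · have hlt : sInf (H '' C) < min x (m + 1/(n+1+1)) := by
            refine lt_min (by rwa [← hm]) ?_
            rw [← hm]
            have : (0:ℝ) < 1/(n+1+1) := by positivity
            linarith
          obtain ⟨y, hyC, hy⟩ := exists_lt_of_csInf_lt hne hlt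
          exact ⟨y, fun _ => ⟨hyC, lt_of_lt_of_le hy (min_le_left _ _),
            lt_of_lt_of_le hy (min_le_right _ _)⟩⟩
        · exact ⟨0, fun h => absurd h hx⟩
      choose f hf using hstep
      obtain ⟨y₀, hy₀C, hy₀⟩ : ∃ y ∈ H '' C, y < m + 1/(0+1) := by
        apply exists_lt_of_csInf_lt hne
        rw [← hm]
        have : (0:ℝ) < 1/(0+1) := by norm_num
        linarith
      set h : ℕ → ℝ := fun n => Nat.rec y₀ (fun k x => f k x) n with hh
      have hinv : ∀ n, h n ∈ H '' C ∧ h n < m + 1/(n+1) := by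
        intro n
        induction n with
        | zero => exact ⟨hy₀C, by show y₀ < _; simpa using hy₀⟩
        | succ k ih =>
          have hmlt : m < h k := by
            obtain ⟨ω, hω, hωe⟩ := ih.1
            rw [← hωe]; exact hgt ω hω
          have h2 := hf k (h k) hmlt
          refine ⟨h2.1, ?_⟩
          have h3 := h2.2.2
          push_cast at h3 ⊢
          linarith
      have hdec : ∀ n, h (n + 1) < h n := by
        intro n
        have hmlt : m < h n := by
          obtain ⟨ω, hω, hωe⟩ := (hinv n).1
          rw [← hωe]; exact hgt ω hω
        exact (hf n (h n) hmlt).2.1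
      have hanti : StrictAnti h := strictAnti_nat_of_succ_lt hdec
      refine ⟨fun n => Nat.rec (C ∩ {ω | h 0 ≤ H ω ∧ H ω < T + 1})
          (fun k _ => C ∩ {ω | h (k+1) ≤ H ω ∧ H ω < h k}) n,
        h, fun n => Nat.rec (T+1) (fun k _ => h k) n, fun n => ?_, ?_, ?_, ?_⟩
      · cases n <;> rfl
      · apply Set.Subset.antisymm
        · refine Set.iUnion_subset fun n => ?_
          cases n <;> exact Set.inter_subset_left
        · intro ω hω
          rcases le_or_gt (h 0) (H ω) with h0 | h0
          · exact Set.mem_iUnion.2 ⟨0, hω, h0, by linarith [hHT ω]⟩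
          · have hex : ∃ n, h n ≤ H ω := by
              obtain ⟨n, hn⟩ := exists_nat_one_div_lt (sub_pos.2 (hgt ω hω))
              refine ⟨n, le_of_lt ?_⟩
              have := (hinv n).2
              have : h n < m + 1/(n+1) := this

              linarith
            set n₀ := Nat.find hex with hn₀
            have hn₀le : h n₀ ≤ H ω := Nat.find_spec hex
            have hn₀ne : n₀ ≠ 0 := by
              intro hc
              rw [hc] at hn₀le
              linarith
            obtain ⟨k, hk⟩ : ∃ k, n₀ = k + 1 := ⟨n₀ - 1, by omega⟩
            have hklt : H ω < h k := by
              have := Nat.find_min hex (m := k) (by omega)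
              linarith [not_le.1 this]
            refine Set.mem_iUnion.2 ⟨k + 1, hω, ?_, hklt⟩
            rw [hk] at hn₀le; exact hn₀le
      · -- pairwise disjoint
        have key : ∀ i j : ℕ, i < j →
            Disjoint (Nat.rec (C ∩ {ω | h 0 ≤ H ω ∧ H ω < T + 1})
              (fun k _ => C ∩ {ω | h (k+1) ≤ H ω ∧ H ω < h k}) i : Set α)
              (Nat.rec (C ∩ {ω | h 0 ≤ H ω ∧ H ω < T + 1})
              (fun k _ => C ∩ {ω | h (k+1) ≤ H ω ∧ H ω < h k}) j) := by
          intro i j hij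
          obtain ⟨k, rfl⟩ : ∃ k, j = k + 1 := ⟨j - 1, by omega⟩
          rw [Set.disjoint_left]
          intro ω hωi hωj
          have hupper : H ω < h k := hωj.2.2
          have hlower : h i ≤ H ω := by
            cases i with
            | zero => exact hωi.2.1
            | succ l => exact hωi.2.1
          have : h k ≤ h i := hanti.antitone (by omega)
          linarith
        intro i j hij
        rcases lt_or_gt_of_ne hij with h' | h'
        · exact key i j h'
        · exact (key j i h').symm
      · -- min attained
        intro n _
        cases n with
        | zero =>
          obtain ⟨ω₀, hω₀C, hω₀e⟩ := (hinv 0).1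
          refine ⟨ω₀, ⟨hω₀C, le_of_eq hω₀e.symm, by linarith [hHT ω₀, hω₀e]⟩, ?_⟩
          intro ω hω
          rw [hω₀e]
          exact hω.2.1
        | succ k =>
          obtain ⟨ω₀, hω₀C, hω₀e⟩ := (hinv (k+1)).1
          refine ⟨ω₀, ⟨hω₀C, le_of_eq hω₀e.symm, by rw [hω₀e]; exact hdec k⟩, ?_⟩
          intro ω hω
          rw [hω₀e]
          exact hω.2.1

/-- if `H` is an `𝔽`-stopping time with values in `[0,T]`, `δ > 0`,
`0 = t_0 < t_1 < ⋯ < t_N = T` is a grid with mesh `≤ δ` and `t_{N+1} = T + δ`, then every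
`E ∈ F_H` admits a countable `F_H`-measurable partition `(Ẽ_k)` such that on each `Ẽ_k`,
`H` takes values in a single grid interval `[t_{p_k}, t_{p_k+1})`, the stopped paths are
`δ`-close to each other in sup norm, and the minimum of `H` over `Ẽ_k` is attained at
some `ω^k ∈ Ẽ_k` (when `Ẽ_k ≠ ∅`). -/
theorem stmt_3 (d : ℕ) (T : ℝ) (hT : 0 < T)
    (H : PathSpace d T hT.le → ℝ)
    (hHrange : ∀ ω, H ω ∈ Set.Icc (0 : ℝ) T)
    (hHstop : ∀ t ∈ Set.Icc (0 : ℝ) T,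
      MeasurableSet[pathSigma d T hT.le t] {ω | H ω ≤ t})
    (δ : ℝ) (hδ : 0 < δ) (N : ℕ) (hN : 0 < N) (tg : ℕ → ℝ)
    (htg0 : tg 0 = 0) (htgN : tg N = T)
    (htgmono : ∀ k < N, tg k < tg (k + 1))
    (htggap : ∀ k < N, tg (k + 1) - tg k ≤ δ)
    (htgN1 : tg (N + 1) = T + δ)
    (E : Set (PathSpace d T hT.le))
    (hE : ∀ t ∈ Set.Icc (0 : ℝ) T,
      MeasurableSet[pathSigma d T hT.le t] (E ∩ {ω | H ω ≤ t})) :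
    ∃ (Etil : ℕ → Set (PathSpace d T hT.le)) (p : ℕ → ℕ),
      Pairwise (Function.onFun Disjoint Etil) ∧
      (⋃ k, Etil k) = E ∧
      (∀ k, ∀ t ∈ Set.Icc (0 : ℝ) T,
        MeasurableSet[pathSigma d T hT.le t] (Etil k ∩ {ω | H ω ≤ t})) ∧
      (∀ k, p k ≤ N) ∧
      (∀ k, ∀ ω ∈ Etil k, tg (p k) ≤ H ω ∧ H ω < tg (p k + 1)) ∧
      (∀ k, ∀ ω ∈ Etil k, ∀ ω' ∈ Etil k, ∀ s : Set.Icc (0 : ℝ) T,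
        ‖stoppedPath d T hT.le ω.1 (H ω) s - stoppedPath d T hT.le ω'.1 (H ω') s‖ ≤ δ) ∧
      (∀ k, (Etil k).Nonempty → ∃ ωk ∈ Etil k, ∀ ω ∈ Etil k, H ωk ≤ H ω) := by
  classical
  -- extended grid monotonicity
  have htgmono' : ∀ k < N + 1, tg k < tg (k + 1) := by
    intro k hk
    rcases lt_or_eq_of_le (Nat.lt_succ_iff.1 hk) with h | h
    · exact htgmono k h
    · subst h; rw [htgN, htgN1]; linarith
  have htgle : ∀ u v : ℕ, u ≤ v → v ≤ N + 1 → tg u ≤ tg v := by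
    intro u v huv hv
    obtain ⟨c, rfl⟩ := Nat.exists_eq_add_of_le huv
    clear huv
    induction c with
    | zero => simp
    | succ m ih =>
      have h1 : tg (u + m) < tg (u + m + 1) := htgmono' (u + m) (by omega)
      have := ih (by omega)
      calc tg u ≤ tg (u + m) := this
        _ ≤ tg (u + (m+1)) := by rw [show u + (m+1) = u + m + 1 by ring]; exact h1.le
  -- dense sequence in the space of continuous paths
  haveI : Nonempty C(Set.Icc (0:ℝ) T, EuclideanSpace ℝ (Fin d)) :=
    ⟨ContinuousMap.const _ 0⟩
  set x : ℕ → C(Set.Icc (0:ℝ) T, EuclideanSpace ℝ (Fin d)) :=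
    TopologicalSpace.denseSeq C(Set.Icc (0:ℝ) T, EuclideanSpace ℝ (Fin d)) with hx
  have hxdense : DenseRange x :=
    TopologicalSpace.denseRange_denseSeq C(Set.Icc (0:ℝ) T, EuclideanSpace ℝ (Fin d))
  -- the stopped path as a continuous map
  set Φ : PathSpace d T hT.le → C(Set.Icc (0:ℝ) T, EuclideanSpace ℝ (Fin d)) :=
    fun ω => ⟨fun s => ω.1 (Set.projIcc 0 T hT.le (min s.1 (H ω))),
      ω.1.continuous.comp (continuous_projIcc.comp
        (continuous_subtype_val.min continuous_const))⟩ with hΦ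
  -- the ball pieces
  set A : ℕ → Set (PathSpace d T hT.le) := fun i =>
    {ω : PathSpace d T hT.le | ∀ s : Set.Icc (0:ℝ) T,
      ‖ω.1 (Set.projIcc 0 T hT.le (min s.1 (H ω))) - x i s‖ ≤ δ/2} with hA
  have hAcover : ∀ ω, ∃ i, ω ∈ A i := by
    intro ω
    obtain ⟨i, hi⟩ := hxdense.exists_dist_lt (Φ ω) (half_pos hδ)
    refine ⟨i, fun s => ?_⟩
    have h1 : dist (Φ ω s) (x i s) ≤ dist (Φ ω) (x i) := ContinuousMap.dist_apply_le_dist s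
    have : ‖ω.1 (Set.projIcc 0 T hT.le (min s.1 (H ω))) - x i s‖ = dist (Φ ω s) (x i s) := by
      rw [dist_eq_norm]; rfl
    rw [this]
    linarith
  -- the cells
  set Cpi : ℕ × ℕ → Set (PathSpace d T hT.le) := fun q =>
    (E ∩ {ω | tg q.1 ≤ H ω ∧ H ω < tg (q.1 + 1)}) ∩ (A q.2 \ ⋃ j < q.2, A j) with hCpi
  have hrefine := fun q : ℕ × ℕ =>
    refine_min H T (fun ω => (hHrange ω).1) (fun ω => (hHrange ω).2) (Cpi q)
  choose B av bv hBform hBunion hBdisj hBmin using hrefine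
  have hBsub : ∀ q n, B q n ⊆ Cpi q := by
    intro q n
    rw [hBform q n]
    exact Set.inter_subset_left
  -- encoding
  set e : ℕ ≃ ℕ × ℕ × ℕ := (Denumerable.eqv (ℕ × ℕ × ℕ)).symm with he
  set Etil : ℕ → Set (PathSpace d T hT.le) := fun k =>
    if (e k).1 ≤ N then B ((e k).1, (e k).2.1) (e k).2.2 else ∅ with hEtil
  refine ⟨Etil, fun k => min (e k).1 N, ?_, ?_, ?_, ?_, ?_, ?_, ?_⟩
  · -- pairwise disjoint
    have hCdisj : ∀ q q' : ℕ × ℕ, q.1 ≤ N → q'.1 ≤ N → q ≠ q' →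
        Disjoint (Cpi q) (Cpi q') := by
      have key : ∀ q q' : ℕ × ℕ, q.1 ≤ N → q'.1 ≤ N →
          (q.1 < q'.1 ∨ (q.1 = q'.1 ∧ q.2 < q'.2)) → Disjoint (Cpi q) (Cpi q') := by
        rintro ⟨p1, i1⟩ ⟨p2, i2⟩ hp1 hp2 hlt
        rw [Set.disjoint_left]
        rintro ω ⟨⟨-, h1a, h1b⟩, h1c, -⟩ ⟨⟨-, h2a, h2b⟩, -, h2d⟩
        rcases hlt with h | ⟨rfl, h⟩
        · have : tg (p1 + 1) ≤ tg p2 := htgle _ _ (by omega) (by omega)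
          simp only at h1b h2a
          linarith
        · exact h2d (Set.mem_biUnion h h1c)
      intro q q' hq hq' hne
      rcases Nat.lt_trichotomy q.1 q'.1 with h | h | h
      · exact key q q' hq hq' (Or.inl h)
      · rcases Nat.lt_trichotomy q.2 q'.2 with h2 | h2 | h2
        · exact key q q' hq hq' (Or.inr ⟨h, h2⟩)
        · exact absurd (Prod.ext h h2) hne
        · exact (key q' q hq' hq (Or.inr ⟨h.symm, h2⟩)).symm
      · exact (key q' q hq' hq (Or.inl h)).symm
    intro k k' hkk'
    show Disjoint (Etil k) (Etil k')
    rw [hEtil]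
    by_cases h1 : (e k).1 ≤ N
    swap
    · simp [h1, Set.empty_disjoint]
    by_cases h2 : (e k').1 ≤ N
    swap
    · simp [h1, h2, Set.disjoint_empty]
    simp only [h1, h2, if_true]
    have hne : e k ≠ e k' := fun hc => hkk' (e.injective hc)
    by_cases hq : ((e k).1, (e k).2.1) = ((e k').1, (e k').2.1)
    · -- same cell, different slice index
      have hn : (e k).2.2 ≠ (e k').2.2 := by
        intro hc
        apply hne
        have h1' : (e k).1 = (e k').1 := (Prod.ext_iff.1 hq).1
        have h2' : (e k).2.1 = (e k').2.1 := (Prod.ext_iff.1 hq).2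
        exact Prod.ext h1' (Prod.ext h2' hc)
      have := hBdisj ((e k).1, (e k).2.1) hn
      rw [hq] at this ⊢
      exact this
    · exact Set.disjoint_of_subset (hBsub _ _) (hBsub _ _)
        (hCdisj _ _ h1 h2 hq)
  · -- union = E
    apply Set.Subset.antisymm
    · refine Set.iUnion_subset fun k => ?_
      rw [hEtil]
      by_cases h1 : (e k).1 ≤ N
      · simp only [h1, if_true]
        exact (hBsub _ _).trans (Set.inter_subset_left.trans Set.inter_subset_left)
      · simp [h1]
    · intro ω hω
      -- find grid index
      have hexp : ∃ q, H ω < tg (q + 1) := ⟨N, by rw [htgN1]; linarith [(hHrange ω).2]⟩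
      set p₀ := Nat.find hexp with hp₀
      have hp₀le : p₀ ≤ N := Nat.find_le (by rw [htgN1]; linarith [(hHrange ω).2])
      have hp₀ub : H ω < tg (p₀ + 1) := Nat.find_spec hexp
      have hp₀lb : tg p₀ ≤ H ω := by
        cases hpe : p₀ with
        | zero => rw [htg0]; exact (hHrange ω).1
        | succ m =>
          have := Nat.find_min hexp (m := m) (by omega)
          exact le_of_not_gt this
      -- find ball index
      have hexi : ∃ i, ω ∈ A i := hAcover ω
      set i₀ := Nat.find hexi with hi₀
      have hi₀mem : ω ∈ A i₀ := Nat.find_spec hexi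
      have hi₀min : ω ∉ ⋃ j < i₀, A j := by
        simp only [Set.mem_iUnion, not_exists]
        intro j hj hmem
        exact Nat.find_min hexi hj hmem
      have hωC : ω ∈ Cpi (p₀, i₀) := ⟨⟨hω, hp₀lb, hp₀ub⟩, hi₀mem, hi₀min⟩
      rw [← hBunion (p₀, i₀)] at hωC
      obtain ⟨n₀, hn₀⟩ := Set.mem_iUnion.1 hωC
      refine Set.mem_iUnion.2 ⟨e.symm (p₀, i₀, n₀), ?_⟩
      rw [hEtil]
      simp only [Equiv.apply_symm_apply]
      simp only [hp₀le, if_true]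
      exact hn₀
  · -- measurability
    intro k
    show ∀ t ∈ Set.Icc (0:ℝ) T, MeasurableSet[pathSigma d T hT.le t] (Etil k ∩ {ω | H ω ≤ t})
    rw [hEtil]
    by_cases h1 : (e k).1 ≤ N
    swap
    · simp only [h1, if_false]
      exact memFH_empty
    simp only [h1, if_true]
    set q := ((e k).1, (e k).2.1)
    rw [hBform q (e k).2.2]
    have hEm : memFH H E := hE
    have hgrid : memFH H {ω : PathSpace d T hT.le | tg q.1 ≤ H ω ∧ H ω < tg (q.1 + 1)} := by
      have : {ω : PathSpace d T hT.le | tg q.1 ≤ H ω ∧ H ω < tg (q.1 + 1)} =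
          {ω | tg q.1 ≤ H ω} ∩ {ω | H ω < tg (q.1 + 1)} := rfl
      rw [this]
      exact memFH_inter (memFH_Hge hHrange hHstop _) (memFH_Hlt hHrange hHstop _)
    have hAm : ∀ i, memFH H (A i) := fun i => memFH_ball hHrange hHstop (x i) (δ/2)
    have hAdiff : memFH H (A q.2 \ ⋃ j < q.2, A j) := by
      have hU : memFH H (⋃ j < q.2, A j) := by
        apply memFH_iUnion
        intro j
        by_cases hj : j < q.2
        · simpa [hj] using hAm j
        · simp only [hj]
          simpa using (memFH_empty (H := H))
      have : A q.2 \ ⋃ j < q.2, A j = A q.2 ∩ (⋃ j < q.2, A j)ᶜ := rfl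
      rw [this]
      exact memFH_inter (hAm q.2) (memFH_compl hHstop hU)
    have hint : memFH H {ω : PathSpace d T hT.le |
        av q (e k).2.2 ≤ H ω ∧ H ω < bv q (e k).2.2} := by
      have : {ω : PathSpace d T hT.le | av q (e k).2.2 ≤ H ω ∧ H ω < bv q (e k).2.2} =
          {ω | av q (e k).2.2 ≤ H ω} ∩ {ω | H ω < bv q (e k).2.2} := rfl
      rw [this]
      exact memFH_inter (memFH_Hge hHrange hHstop _) (memFH_Hlt hHrange hHstop _)
    exact memFH_inter (memFH_inter (memFH_inter hEm hgrid) hAdiff) hint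
  · -- p k ≤ N
    intro k; exact min_le_right _ _
  · -- grid values
    intro k ω hω
    rw [hEtil] at hω
    by_cases h1 : (e k).1 ≤ N
    swap
    · simp [h1] at hω
    simp only [h1, if_true] at hω
    have h2 := (hBsub _ _ hω).1.2
    simp only [min_eq_left h1]
    exact h2
  · -- δ-closeness
    intro k ω hω ω' hω' s
    rw [hEtil] at hω hω'
    by_cases h1 : (e k).1 ≤ N
    swap
    · simp [h1] at hω
    simp only [h1, if_true] at hω hω'
    have hωA : ω ∈ A (e k).2.1 := (hBsub _ _ hω).2.1
    have hω'A : ω' ∈ A (e k).2.1 := (hBsub _ _ hω').2.1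
    have h1' := hωA s
    have h2' := hω'A s
    have heq : stoppedPath d T hT.le ω.1 (H ω) s =
        ω.1 (Set.projIcc 0 T hT.le (min s.1 (H ω))) := rfl
    have heq' : stoppedPath d T hT.le ω'.1 (H ω') s =
        ω'.1 (Set.projIcc 0 T hT.le (min s.1 (H ω'))) := rfl
    rw [heq, heq']
    calc ‖ω.1 (Set.projIcc 0 T hT.le (min s.1 (H ω))) -
          ω'.1 (Set.projIcc 0 T hT.le (min s.1 (H ω')))‖
        ≤ ‖ω.1 (Set.projIcc 0 T hT.le (min s.1 (H ω))) - x (e k).2.1 s‖ +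
          ‖x (e k).2.1 s - ω'.1 (Set.projIcc 0 T hT.le (min s.1 (H ω')))‖ :=
          norm_sub_le_norm_sub_add_norm_sub _ _ _
      _ ≤ δ/2 + δ/2 := by
          rw [norm_sub_rev (x (e k).2.1 s)]
          linarith
      _ = δ := by ring
  · -- min attained
    intro k hk
    rw [hEtil] at hk ⊢
    by_cases h1 : (e k).1 ≤ N
    swap
    · simp [h1] at hk
    simp only [h1, if_true] at hk ⊢
    exact hBmin _ _ hk
end

section
/- Let T > 0, ε > 0, let ω, ω' : [0,T] → ℝ^d be continuous, let ω̃ : [0,T] → ℝ^d be continuous with ω̃_0 = 0, and let (τ_m)_{m≥0} denote successive ε-oscillation times. For r ∈ [0,T] define the concatenated path (ω ⊗_r ω̃)_s := ω_s for s ∈ [0,r] and (ω ⊗_r ω̃)_s := ω_r + ω̃_{s−r} for s ∈ [r,T]. Then for every m ≥ 0: (i) τ_i(ω ⊗_{τ_m(ω)} ω̃) = τ_i(ω) for all 0 ≤ i ≤ m; (ii) τ_{m+1}(ω ⊗_{τ_m(ω)} ω̃) = min( T, τ_m(ω) + σ_ε(ω̃) ), where σ_ε(ω̃) := inf{ t ∈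 (0,T] : |ω̃_t| = ε } (with inf ∅ := +∞); (iii) consequently, if τ_m(ω) ≤ τ_m(ω'), then 0 ≤ τ_{m+1}(ω' ⊗_{τ_m(ω')} ω̃) − τ_{m+1}(ω ⊗_{τ_m(ω)} ω̃) ≤ τ_m(ω') − τ_m(ω). -/
open Classical

/-- The successive `ε`-oscillation times of a path `ω : [0,T] → ℝ^d`:
`τ₀ := 0` and `τ_{m+1} := inf{ s ∈ (τ_m, T] : |ω_s − ω_{τ_m}| = ε } ∧ T`
(with `τ_{m+1} = T` if the set is empty, i.e. the convention `inf ∅ = +∞`). -/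
noncomputable def oscTimes (d : ℕ) (T ε : ℝ) (ω : ℝ → EuclideanSpace ℝ (Fin d)) : ℕ → ℝ
  | 0 => 0
  | m + 1 =>
    let τ := oscTimes d T ε ω m
    let S : Set ℝ := {s : ℝ | τ < s ∧ s ≤ T ∧ ‖ω s - ω τ‖ = ε}
    if S.Nonempty then min (sInf S) T else T

/-- The concatenation `ω ⊗_r ω̃`, equal to `ω_s` for `s ≤ r` and `ω_r + ω̃_{s−r}` for `s ≥ r`. -/
noncomputable def concatAt (d : ℕ) (r : ℝ) (ω ωtil : ℝ → EuclideanSpace ℝ (Fin d)) :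
    ℝ → EuclideanSpace ℝ (Fin d) :=
  fun s => if s ≤ r then ω s else ω r + ωtil (s - r)
lemma oscTimes_succ (d : ℕ) (T ε : ℝ) (ω : ℝ → EuclideanSpace ℝ (Fin d)) (m : ℕ) :
    oscTimes d T ε ω (m + 1) =
      if ({s : ℝ | oscTimes d T ε ω m < s ∧ s ≤ T ∧
          ‖ω s - ω (oscTimes d T ε ω m)‖ = ε} : Set ℝ).Nonempty
      then min (sInf {s : ℝ | oscTimes d T ε ω m < s ∧ s ≤ T ∧
          ‖ω s - ω (oscTimes d T ε ω m)‖ = ε}) T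
      else T := rfl

lemma oscTimes_le_T (d : ℕ) (T ε : ℝ) (hT : 0 ≤ T) (ω : ℝ → EuclideanSpace ℝ (Fin d)) :
    ∀ m, oscTimes d T ε ω m ≤ T := by
  intro m
  cases m with
  | zero => exact hT
  | succ m =>
    rw [oscTimes_succ]
    split
    · exact min_le_right _ _
    · exact le_refl T

lemma oscTimes_mono (d : ℕ) (T ε : ℝ) (hT : 0 ≤ T) (ω : ℝ → EuclideanSpace ℝ (Fin d)) :
    Monotone (oscTimes d T ε ω) := by
  apply monotone_nat_of_le_succ
  intro m
  rw [oscTimes_succ]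
  set τ := oscTimes d T ε ω m with hτ
  split
  · rename_i h
    refine le_min ?_ (oscTimes_le_T d T ε hT ω m)
    refine le_csInf h ?_
    intro b hb
    exact le_of_lt hb.1
  · exact oscTimes_le_T d T ε hT ω m

lemma oscTimes_nonneg (d : ℕ) (T ε : ℝ) (hT : 0 ≤ T) (ω : ℝ → EuclideanSpace ℝ (Fin d)) (m : ℕ) :
    0 ≤ oscTimes d T ε ω m :=
  oscTimes_mono d T ε hT ω (Nat.zero_le m)

/-- Attainment of the infimum for a continuous function. -/
lemma sInf_mem_osc {T ε a : ℝ} {g : ℝ → ℝ} (hε : 0 < ε)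
    (hg : ContinuousOn g (Set.Icc a T)) (hga : g a = 0)
    (hS : ({s : ℝ | a < s ∧ s ≤ T ∧ g s = ε}).Nonempty) :
    sInf {s : ℝ | a < s ∧ s ≤ T ∧ g s = ε} ∈ {s : ℝ | a < s ∧ s ≤ T ∧ g s = ε} := by
  set S := {s : ℝ | a < s ∧ s ≤ T ∧ g s = ε} with hSdef
  have hbdd : BddBelow S := ⟨a, fun x hx => le_of_lt hx.1⟩
  have hsub : S ⊆ Set.Icc a T ∩ g ⁻¹' {ε} := by
    intro x hx
    exact ⟨⟨le_of_lt hx.1, hx.2.1⟩, hx.2.2⟩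
  have hC : IsClosed (Set.Icc a T ∩ g ⁻¹' {ε}) :=
    hg.preimage_isClosed_of_isClosed isClosed_Icc isClosed_singleton
  have hmem : sInf S ∈ Set.Icc a T ∩ g ⁻¹' {ε} :=
    (closure_minimal hsub hC) (csInf_mem_closure hS hbdd)
  have hge : g (sInf S) = ε := hmem.2
  have hne : sInf S ≠ a := by
    intro h
    rw [h, hga] at hge
    exact absurd hge.symm (ne_of_gt hε)
  exact ⟨lt_of_le_of_ne hmem.1.1 (Ne.symm hne), hmem.1.2, hge⟩


lemma concatAt_of_le (d : ℕ) (r : ℝ) (ω ωtil : ℝ → EuclideanSpace ℝ (Fin d)) {s : ℝ}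
    (h : s ≤ r) : concatAt d r ω ωtil s = ω s := if_pos h

lemma concatAt_of_gt (d : ℕ) (r : ℝ) (ω ωtil : ℝ → EuclideanSpace ℝ (Fin d)) {s : ℝ}
    (h : r < s) : concatAt d r ω ωtil s = ω r + ωtil (s - r) := if_neg (not_le.mpr h)

lemma osc_concat_eq (d : ℕ) (T ε : ℝ) (hT : 0 < T) (hε : 0 < ε)
    (ω ωtil : ℝ → EuclideanSpace ℝ (Fin d)) (hω : ContinuousOn ω (Set.Icc 0 T)) (m : ℕ) :
    ∀ i ≤ m, oscTimes d T ε (concatAt d (oscTimes d T ε ω m) ω ωtil) i = oscTimes d T ε ω i := by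
  have hT0 : (0:ℝ) ≤ T := le_of_lt hT
  set r := oscTimes d T ε ω m with hr
  set ωh := concatAt d r ω ωtil with hωh
  intro i
  induction i with
  | zero => intro _; rfl
  | succ i ih =>
    intro hi
    have hi' : i ≤ m := Nat.le_of_succ_le hi
    have IH := ih hi'
    set τ := oscTimes d T ε ω i with hτdef
    have hτr : τ ≤ r := oscTimes_mono d T ε hT0 ω hi'
    have hτ0 : 0 ≤ τ := oscTimes_nonneg d T ε hT0 ω i
    have hτT : τ ≤ T := oscTimes_le_T d T ε hT0 ω i
    have hωhτ : ωh τ = ω τ := concatAt_of_le d r ω ωtil hτr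
    rw [oscTimes_succ, IH, hωhτ, oscTimes_succ]
    set B := {s : ℝ | τ < s ∧ s ≤ T ∧ ‖ω s - ω τ‖ = ε} with hBdef
    set A := {s : ℝ | τ < s ∧ s ≤ T ∧ ‖ωh s - ω τ‖ = ε} with hAdef
    by_cases hB : B.Nonempty
    · have hsmem : sInf B ∈ B := by
        apply sInf_mem_osc hε (g := fun s => ‖ω s - ω τ‖)
        · exact ((hω.mono (Set.Icc_subset_Icc_left hτ0)).sub continuousOn_const).norm
        · simp
        · exact hB
      set s' := sInf B with hs'def
      have hs'T : s' ≤ T := hsmem.2.1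
      have hsucc : oscTimes d T ε ω (i+1) = s' := by
        rw [oscTimes_succ, if_pos hB, min_eq_left hs'T]
      have hs'r : s' ≤ r := by
        rw [← hsucc]; exact oscTimes_mono d T ε hT0 ω hi
      have hsA : s' ∈ A := by
        refine ⟨hsmem.1, hs'T, ?_⟩
        rw [hωh, concatAt_of_le d r ω ωtil hs'r]
        exact hsmem.2.2
      have hA : A.Nonempty := ⟨s', hsA⟩
      have hbddA : BddBelow A := ⟨τ, fun x hx => le_of_lt hx.1⟩
      have hinfA : sInf A = s' := by
        refine le_antisymm (csInf_le hbddA hsA) (le_csInf hA ?_)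
        intro b hb
        by_contra hlt
        push_neg at hlt
        have hbr : b ≤ r := le_trans (le_of_lt hlt) hs'r
        have hbB : b ∈ B := by
          refine ⟨hb.1, hb.2.1, ?_⟩
          rw [← concatAt_of_le d r ω ωtil hbr]
          exact hb.2.2
        exact absurd (csInf_le ⟨τ, fun x hx => le_of_lt hx.1⟩ hbB) (not_le.mpr hlt)
      rw [if_pos hA, if_pos hB, hinfA]
    · have hrT : r = T := by
        have h1 : oscTimes d T ε ω (i+1) = T := by rw [oscTimes_succ, if_neg hB]
        have h2 : T ≤ r := h1 ▸ oscTimes_mono d T ε hT0 ω hi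
        exact le_antisymm (oscTimes_le_T d T ε hT0 ω m) h2
      have hA : ¬ A.Nonempty := by
        rintro ⟨b, hb⟩
        apply hB
        refine ⟨b, hb.1, hb.2.1, ?_⟩
        rw [← concatAt_of_le d r ω ωtil (hrT ▸ hb.2.1)]
        exact hb.2.2
      rw [if_neg hA, if_neg hB]

lemma osc_concat_succ (d : ℕ) (T ε : ℝ) (hT : 0 < T) (hε : 0 < ε)
    (ω ωtil : ℝ → EuclideanSpace ℝ (Fin d)) (hω : ContinuousOn ω (Set.Icc 0 T))
    (hωtil : ContinuousOn ωtil (Set.Icc 0 T)) (hωtil0 : ωtil 0 = 0)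
    (S : Set ℝ) (hS : S = {t : ℝ | 0 < t ∧ t ≤ T ∧ ‖ωtil t‖ = ε}) (m : ℕ) :
    oscTimes d T ε (concatAt d (oscTimes d T ε ω m) ω ωtil) (m + 1) =
      if S.Nonempty then min T (oscTimes d T ε ω m + sInf S) else T := by
  have hT0 : (0:ℝ) ≤ T := le_of_lt hT
  set r := oscTimes d T ε ω m with hr
  have hr0 : 0 ≤ r := oscTimes_nonneg d T ε hT0 ω m
  have hrT : r ≤ T := oscTimes_le_T d T ε hT0 ω m
  set ωh := concatAt d r ω ωtil with hωh
  have heq : oscTimes d T ε ωh m = r := osc_concat_eq d T ε hT hε ω ωtil hω m m le_rfl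
  have hωhr : ωh r = ω r := concatAt_of_le d r ω ωtil le_rfl
  rw [oscTimes_succ, heq, hωhr]
  set A := {s : ℝ | r < s ∧ s ≤ T ∧ ‖ωh s - ω r‖ = ε} with hAdef
  have hAnorm : ∀ {s : ℝ}, r < s → ‖ωh s - ω r‖ = ‖ωtil (s - r)‖ := by
    intro s hs
    rw [hωh, concatAt_of_gt d r ω ωtil hs, add_sub_cancel_left]
  have hmemS : ∀ b ∈ A, b - r ∈ S := by
    intro b hb
    rw [hS]
    refine ⟨sub_pos.mpr hb.1, ?_, ?_⟩
    · linarith [hb.2.1]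
    · rw [← hAnorm hb.1]; exact hb.2.2
  have hbddS : BddBelow S := by
    rw [hS]; exact ⟨0, fun x hx => le_of_lt hx.1⟩
  by_cases hSne : S.Nonempty
  · have hσmem : sInf S ∈ S := by
      rw [hS]
      apply sInf_mem_osc hε (g := fun t => ‖ωtil t‖) hωtil.norm (by simp [hωtil0])
      rw [← hS]; exact hSne
    set σ := sInf S with hσdef
    rw [hS] at hσmem
    have hσ0 : 0 < σ := hσmem.1
    by_cases h1 : r + σ ≤ T
    · have hmem : r + σ ∈ A := by
        refine ⟨by linarith, h1, ?_⟩
        rw [hAnorm (by linarith)]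
        simpa using hσmem.2.2
      have hA : A.Nonempty := ⟨r + σ, hmem⟩
      have hbddA : BddBelow A := ⟨r, fun x hx => le_of_lt hx.1⟩
      have hinfA : sInf A = r + σ := by
        refine le_antisymm (csInf_le hbddA hmem) (le_csInf hA ?_)
        intro b hb
        have := csInf_le hbddS (hmemS b hb)
        linarith
      rw [if_pos hA, if_pos hSne, hinfA, min_comm]
    · have hA : ¬ A.Nonempty := by
        rintro ⟨b, hb⟩
        have := csInf_le hbddS (hmemS b hb)
        have := hb.2.1
        linarith
      rw [if_neg hA, if_pos hSne, min_eq_left (by linarith)]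
  · have hA : ¬ A.Nonempty := by
      rintro ⟨b, hb⟩
      exact hSne ⟨b - r, hmemS b hb⟩
    rw [if_neg hA, if_neg hSne]

theorem stmt_6 (d : ℕ) (T ε : ℝ) (hT : 0 < T) (hε : 0 < ε)
    (ω ω' ωtil : ℝ → EuclideanSpace ℝ (Fin d))
    (hω : ContinuousOn ω (Set.Icc 0 T)) (hω' : ContinuousOn ω' (Set.Icc 0 T))
    (hωtil : ContinuousOn ωtil (Set.Icc 0 T)) (hωtil0 : ωtil 0 = 0)
    (S : Set ℝ) (hS : S = {t : ℝ | 0 < t ∧ t ≤ T ∧ ‖ωtil t‖ = ε}) :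
    (∀ m : ℕ, ∀ i ≤ m,
      oscTimes d T ε (concatAt d (oscTimes d T ε ω m) ω ωtil) i = oscTimes d T ε ω i) ∧
    (∀ m : ℕ,
      (S.Nonempty →
        oscTimes d T ε (concatAt d (oscTimes d T ε ω m) ω ωtil) (m + 1) =
          min T (oscTimes d T ε ω m + sInf S)) ∧
      (¬ S.Nonempty →
        oscTimes d T ε (concatAt d (oscTimes d T ε ω m) ω ωtil) (m + 1) = T)) ∧
    (∀ m : ℕ, oscTimes d T ε ω m ≤ oscTimes d T ε ω' m →
      0 ≤ oscTimes d T ε (concatAt d (oscTimes d T ε ω' m) ω' ωtil) (m + 1) -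
          oscTimes d T ε (concatAt d (oscTimes d T ε ω m) ω ωtil) (m + 1) ∧
      oscTimes d T ε (concatAt d (oscTimes d T ε ω' m) ω' ωtil) (m + 1) -
          oscTimes d T ε (concatAt d (oscTimes d T ε ω m) ω ωtil) (m + 1) ≤
        oscTimes d T ε ω' m - oscTimes d T ε ω m) := by
  refine ⟨fun m i hi => osc_concat_eq d T ε hT hε ω ωtil hω m i hi, fun m => ?_, fun m hle => ?_⟩
  · have h := osc_concat_succ d T ε hT hε ω ωtil hω hωtil hωtil0 S hS m
    constructor
    · intro hne; rw [h, if_pos hne]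
    · intro hne; rw [h, if_neg hne]
  · have h := osc_concat_succ d T ε hT hε ω ωtil hω hωtil hωtil0 S hS m
    have h' := osc_concat_succ d T ε hT hε ω' ωtil hω' hωtil hωtil0 S hS m
    rw [h, h']
    set r := oscTimes d T ε ω m
    set r' := oscTimes d T ε ω' m
    set σ := sInf S
    by_cases hne : S.Nonempty
    · rw [if_pos hne, if_pos hne]
      constructor
      · have := min_le_min (le_refl T) (add_le_add hle (le_refl σ))
        linarith
      · have key : min T (r' + σ) ≤ min T (r + σ) + (r' - r) := by
          rcases le_total T (r + σ) with hc | hc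
          · have h2 : min T (r' + σ) ≤ T := min_le_left _ _
            rw [min_eq_left hc]; linarith
          · have h2 : min T (r' + σ) ≤ r' + σ := min_le_right _ _
            rw [min_eq_right hc]; linarith
        linarith
    · rw [if_neg hne, if_neg hne]
      constructor <;> linarith
end
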